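/- Let C be a triangulated category and X a subcategory of C that is contravariantly finite and satisfies X = {M in C : Hom_C(X, M[1]) = 0 for all X in X}. Then X is cluster tilting; that is, X is also covariantly finite and X = {M in C : Hom_C(M, X[1]) = 0 for all X in X}. -/

import Mathlib

open CategoryTheory CategoryTheory.Limits CategoryTheory.Pretriangulated

universe v u

namespace ClusterNote

/-- A Serre functor on a `k`-linear category `C`: a `k`-linear autoequivalence `S`
with bifunctorial isomorphisms `Hom(A, B) ≅ D Hom(B, S A)`. -/
structure SerreFunctor (k : Type*) [Field k] (C : Type u) [Category.{v} C]
    [Preadditive C] [Linear k C] where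
  S : C ⥤ C
  additive : S.Additive
  linear : S.Linear k
  isEquivalence : S.IsEquivalence
  serre : ∀ A B : C, (A ⟶ B) ≃ₗ[k] Module.Dual k (B ⟶ S.obj A)
  serre_natural_left : ∀ ⦃A' A B : C⦄ (u : A' ⟶ A) (f : A ⟶ B) (φ : B ⟶ S.obj A'),
    serre A' B (u ≫ f) φ = serre A B f (φ ≫ S.map u)
  serre_natural_right : ∀ ⦃A B B' : C⦄ (f : A ⟶ B) (v : B ⟶ B') (ψ : B' ⟶ S.obj A),
    serre A B' (f ≫ v) ψ = serre A B f (v ≫ ψ)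

variable {C : Type u} [Category.{v} C]

/-- A morphism factors through an object of the subcategory `X`. -/
def FactorsThru (X : Set C) {A B : C} (f : A ⟶ B) : Prop :=
  ∃ Z ∈ X, ∃ (g : A ⟶ Z) (h : Z ⟶ B), g ≫ h = f

/-- `X` contains all zero objects. -/
def ContainsZero (X : Set C) : Prop := ∀ Z : C, IsZero Z → Z ∈ X

/-- `X` is closed under retracts (direct summands); this also entails closure
under isomorphisms. -/
def ClosedUnderRetracts (X : Set C) : Prop :=
  ∀ ⦃A P : C⦄ (i : A ⟶ P) (p : P ⟶ A), i ≫ p = 𝟙 A → P ∈ X → A ∈ X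

section Preadd
variable [Preadditive C]

/-- `X` is closed under finite direct sums (stated via binary biproduct data). -/
def ClosedUnderBiprod (X : Set C) : Prop :=
  ∀ ⦃A B P : C⦄ (iA : A ⟶ P) (iB : B ⟶ P) (pA : P ⟶ A) (pB : P ⟶ B),
    iA ≫ pA = 𝟙 A → iB ≫ pB = 𝟙 B → iA ≫ pB = 0 → iB ≫ pA = 0 →
    pA ≫ iA + pB ≫ iB = 𝟙 P → A ∈ X → B ∈ X → P ∈ X

/-- `X` is a full additive subcategory, closed under isomorphisms and direct summands. -/
def GoodSub (X : Set C) : Prop :=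
  ContainsZero X ∧ ClosedUnderRetracts X ∧ ClosedUnderBiprod X

/-- The ideal relation on morphisms: `f ~ g` iff `f - g` factors through an object of `X`. -/
def xRel (X : Set C) : HomRel C := fun {A B : C} (f g : A ⟶ B) => FactorsThru X (f - g)

end Preadd

/-- `g : X₀ ⟶ M` is a right `X`-approximation of `M`. -/
def IsRightApprox (X : Set C) {X₀ M : C} (g : X₀ ⟶ M) : Prop :=
  X₀ ∈ X ∧ ∀ Z ∈ X, ∀ f : Z ⟶ M, ∃ h : Z ⟶ X₀, h ≫ g = f

/-- `X` is contravariantly finite in `C`. -/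
def ContravariantlyFinite (X : Set C) : Prop :=
  ∀ M : C, ∃ (X₀ : C) (g : X₀ ⟶ M), IsRightApprox X g

/-- `g : M ⟶ X₀` is a left `X`-approximation of `M`. -/
def IsLeftApprox (X : Set C) {M X₀ : C} (g : M ⟶ X₀) : Prop :=
  X₀ ∈ X ∧ ∀ Z ∈ X, ∀ f : M ⟶ Z, ∃ h : X₀ ⟶ Z, g ≫ h = f

/-- `X` is covariantly finite in `C`. -/
def CovariantlyFinite (X : Set C) : Prop :=
  ∀ M : C, ∃ (X₀ : C) (g : M ⟶ X₀), IsLeftApprox X g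

section Shifted
variable [Preadditive C] [HasShift C ℤ]

/-- `X` is rigid: `Hom(X, X'[1]) = 0`. -/
def Rigid (X : Set C) : Prop :=
  ∀ A ∈ X, ∀ B ∈ X, ∀ f : A ⟶ B⟦(1 : ℤ)⟧, f = 0

/-- `X` is a cluster tilting subcategory. -/
def ClusterTilting (X : Set C) : Prop :=
  ContravariantlyFinite X ∧ CovariantlyFinite X ∧
    (∀ M : C, M ∈ X ↔ ∀ Z ∈ X, ∀ f : Z ⟶ M⟦(1 : ℤ)⟧, f = 0) ∧
    (∀ M : C, M ∈ X ↔ ∀ Z ∈ X, ∀ f : M ⟶ Z⟦(1 : ℤ)⟧, f = 0)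

end Shifted

section Preadd2
variable [Preadditive C]

/-- An object is indecomposable: it is nonzero and admits no nontrivial idempotent
endomorphism. -/
def Indecomp (A : C) : Prop :=
  ¬ IsZero A ∧ ∀ e : A ⟶ A, e ≫ e = e → e = 0 ∨ e = 𝟙 A

end Preadd2

section Tri
variable [HasZeroObject C] [Preadditive C] [HasShift C ℤ]
  [∀ n : ℤ, (shiftFunctor C n).Additive] [Pretriangulated C]

/-- `A ⟶ B ⟶ N ⟶ A[1]` is an Auslander-Reiten triangle. -/
def IsARTriangle {A B N : C} (u : A ⟶ B) (v : B ⟶ N) (w : N ⟶ A⟦(1 : ℤ)⟧) : Prop :=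
  (Triangle.mk u v w ∈ distTriang C) ∧ Indecomp A ∧ Indecomp N ∧ w ≠ 0 ∧
    ∀ ⦃Y : C⦄ (f : Y ⟶ N), ¬ IsSplitEpi f → ∃ f' : Y ⟶ B, f' ≫ v = f

end Tri


section SerreShift

variable {k : Type*} [Field k] [Preadditive C] [Linear k C] [HasShift C ℤ]

/-- `S(X) = X[2]`. -/
def SerreShiftTwo (T : SerreFunctor k C) (X : Set C) : Prop :=
  (∀ A ∈ X, ∃ A' ∈ X, Nonempty (T.S.obj A ≅ A'⟦(2 : ℤ)⟧)) ∧
  (∀ A ∈ X, ∃ A'' ∈ X, Nonempty (A⟦(2 : ℤ)⟧ ≅ T.S.obj A''))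

end SerreShift


/-- **Koenig–Zhu, Lemma 3.2.** A contravariantly finite subcategory `X` with
`X = {M : Hom(X, M[1]) = 0}` is cluster tilting. -/
theorem cluster_tilting_of_contravariantly_finite {C : Type u} [Category.{v} C] [Limits.HasZeroObject C] [Preadditive C]
    [HasShift C ℤ] [∀ n : ℤ, (shiftFunctor C n).Additive] [Pretriangulated C]
    [IsTriangulated C]
    (X : Set C) (hX : GoodSub X) (hcf : ContravariantlyFinite X)
    (hchar : ∀ M : C, M ∈ X ↔ ∀ Z ∈ X, ∀ f : Z ⟶ M⟦(1 : ℤ)⟧, f = 0) :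
    ClusterTilting X := by
  -- rigidity of X
  have rigid : ∀ A ∈ X, ∀ B ∈ X, ∀ f : A ⟶ B⟦(1 : ℤ)⟧, f = 0 := by
    intro A hA B hB f
    exact (hchar B).mp hB A hA f
  -- maps from a negative shift of an object of X into X vanish
  have rigidneg : ∀ A ∈ X, ∀ B ∈ X, ∀ q : A⟦(-1 : ℤ)⟧ ⟶ B, q = 0 := by
    intro A hA B hB q
    apply (shiftFunctor C (1 : ℤ)).map_injective
    rw [Functor.map_zero]
    have h0 : ((shiftEquiv C (1 : ℤ)).counitIso.inv.app A) ≫ q⟦(1 : ℤ)⟧' = 0 := by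
      apply rigid A hA B hB
    exact (cancel_epi ((shiftEquiv C (1 : ℤ)).counitIso.inv.app A)).1 (h0.trans comp_zero.symm)
  -- covariant finiteness
  have hcov : CovariantlyFinite X := by
    intro M
    obtain ⟨X₀, g, hg0, hgapp⟩ := hcf (M⟦(1 : ℤ)⟧)
    obtain ⟨Y, u, v, hT⟩ := distinguished_cocone_triangle₂ g
    set T := Triangle.mk u v g with hTdef
    -- Y ∈ X
    have hY : Y ∈ X := by
      rw [hchar]
      intro Z hZ f
      have hrot := rot_of_distTriang T hT
      obtain ⟨ψ, hψ⟩ := Triangle.coyoneda_exact₁ T.rotate hrot f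
        (rigid Z hZ X₀ hg0 _)
      obtain ⟨h, hh⟩ := hgapp Z hZ ψ
      have h31 : T.mor₃ ≫ T.mor₁⟦(1 : ℤ)⟧' = 0 := comp_distTriang_mor_zero₃₁ T hT
      rw [hψ, ← hh]
      exact (Category.assoc h g _).trans
        ((congrArg (fun t => h ≫ t) (comp_distTriang_mor_zero₂₃ _ hrot)).trans comp_zero)
    refine ⟨Y, u, hY, ?_⟩
    intro Z hZ f
    obtain ⟨h, hh⟩ := Triangle.yoneda_exact₂ T.invRotate (inv_rot_of_distTriang T hT) f
      (rigidneg X₀ hg0 Z hZ _)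
    exact ⟨h, hh.symm⟩
  refine ⟨hcf, hcov, hchar, ?_⟩
  intro M
  constructor
  · intro hM Z hZ f
    exact rigid M hM Z hZ f
  · intro hM
    obtain ⟨X₀, g, hg0, hgapp⟩ := hcf M
    obtain ⟨N, e, w, hT⟩ := distinguished_cocone_triangle₁ g
    set T := Triangle.mk e g w with hTdef
    -- N ∈ X
    have hN : N ∈ X := by
      rw [hchar]
      intro Z hZ f
      obtain ⟨ψ, hψ⟩ := Triangle.coyoneda_exact₁ T hT f (rigid Z hZ X₀ hg0 _)
      obtain ⟨h, hh⟩ := hgapp Z hZ ψ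
      have h23 : T.mor₂ ≫ T.mor₃ = 0 := comp_distTriang_mor_zero₂₃ T hT
      rw [hψ, ← hh]
      exact (Category.assoc h g _).trans ((congrArg (fun t => h ≫ t) h23).trans comp_zero)
    -- the connecting map vanishes, so g splits
    obtain ⟨s, hs⟩ := Triangle.coyoneda_exact₃ T hT (𝟙 M)
      (by dsimp [T]; exact (Category.id_comp _).trans (hM N hN w))
    exact hX.2.1 s g hs.symm hg0

end ClusterNote
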